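/- Let k ≥ 1 and let n = 2(2k+1). Let (T, R) be an n-hypertournament with T infinite. Then (T, R) has no automorphism τ with τ ∘ τ = id and τ ≠ id; that is, the automorphism group of (T, R) contains no involutions. -/

import Mathlib

namespace Stmt8

/-- `(T, R)` is an `n`-hypertournament: every `n`-element subset has automorphism group
equal to the alternating group.  Concretely: for every injective `v : Fin n → T` and every
permutation `σ` of `Fin n`, `σ` "preserves the structure induced on the image of `v`"
(i.e. `R (v ∘ σ ∘ f) ↔ R (v ∘ f)` for every map `f : Fin n → Fin n`) if and only if `σ`
is an even permutation. -/
def IsHypertournament (n : ℕ) {T : Type*} (R : (Fin n → T) → Prop) : Prop :=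
  ∀ v : Fin n → T, Function.Injective v → ∀ σ : Equiv.Perm (Fin n),
    ((∀ f : Fin n → Fin n, R (v ∘ σ ∘ f) ↔ R (v ∘ f)) ↔ Equiv.Perm.sign σ = 1)

/-- If an automorphism `τ` permutes the image of an injective tuple `v` via a
permutation `σ`, then `σ` must be even. -/
lemma sign_eq_one_of_comm {n : ℕ} {T : Type*} {R : (Fin n → T) → Prop}
    (hR : IsHypertournament n R) {τ : T → T}
    (hauto : ∀ t : Fin n → T, R (τ ∘ t) ↔ R t)
    {v : Fin n → T} (hv : Function.Injective v) {σ : Equiv.Perm (Fin n)}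
    (hcomm : τ ∘ v = v ∘ σ) : Equiv.Perm.sign σ = 1 := by
  refine (hR v hv σ).mp ?_
  intro f
  have h : v ∘ ⇑σ ∘ f = τ ∘ (v ∘ f) := by
    rw [show v ∘ ⇑σ ∘ f = (v ∘ ⇑σ) ∘ f from rfl, ← hcomm]
    rfl
  rw [h]
  exact hauto _

/-- From an infinite moved set, extract `m` points with pairwise disjoint `τ`-orbits. -/
lemma exists_pairs {T : Type*} (τ : T → T) (hinv : ∀ x, τ (τ x) = x)
    (hM : {x : T | τ x ≠ x}.Infinite) (m : ℕ) :
    ∃ p : Fin m → T, Function.Injective p ∧ ∀ i j, τ (p i) ≠ p j := by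
  induction m with
  | zero => exact ⟨Fin.elim0, fun i => i.elim0, fun i => i.elim0⟩
  | succ m ih =>
    obtain ⟨p, hpinj, hpair⟩ := ih
    have hF : (Set.range p ∪ τ '' Set.range p).Finite :=
      (Set.finite_range p).union ((Set.finite_range p).image τ)
    obtain ⟨x, hxM, hxF⟩ := (hM.diff hF).nonempty
    have hxr : x ∉ Set.range p := fun h => hxF (Or.inl h)
    have hxt : ∀ j, τ x ≠ p j := by
      intro j h
      exact hxF (Or.inr ⟨p j, ⟨j, rfl⟩, by rw [← h, hinv]⟩)
    have htxr : ∀ j, τ (p j) ≠ x := by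
      intro j h
      exact hxF (Or.inr ⟨p j, ⟨j, rfl⟩, h⟩)
    refine ⟨Fin.snoc p x, ?_, ?_⟩
    · intro i j hij
      induction i using Fin.lastCases with
      | last =>
        induction j using Fin.lastCases with
        | last => rfl
        | cast j =>
          rw [Fin.snoc_last, Fin.snoc_castSucc] at hij
          exact absurd ⟨j, hij.symm⟩ hxr
      | cast i =>
        induction j using Fin.lastCases with
        | last =>
          rw [Fin.snoc_last, Fin.snoc_castSucc] at hij
          exact absurd ⟨i, hij⟩ hxr
        | cast j =>
          rw [Fin.snoc_castSucc, Fin.snoc_castSucc] at hij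
          exact congrArg Fin.castSucc (hpinj hij)
    · intro i j
      induction i using Fin.lastCases with
      | last =>
        induction j using Fin.lastCases with
        | last => rw [Fin.snoc_last]; exact hxM
        | cast j => rw [Fin.snoc_last, Fin.snoc_castSucc]; exact hxt j
      | cast i =>
        induction j using Fin.lastCases with
        | last => rw [Fin.snoc_last, Fin.snoc_castSucc]; exact htxr i
        | cast j => rw [Fin.snoc_castSucc, Fin.snoc_castSucc]; exact hpair i j

/-- for `k ≥ 1` and `n = 2(2k+1)`, an infinite `n`-hypertournament has no
involutions in its automorphism group. -/
theorem hypertournament_no_involutions {k : ℕ} (hk : 1 ≤ k) {T : Type*} [Infinite T]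
    (R : (Fin (2 * (2 * k + 1)) → T) → Prop)
    (hR : IsHypertournament (2 * (2 * k + 1)) R) :
    ¬ ∃ τ : T → T, Function.Bijective τ ∧
        (∀ t : Fin (2 * (2 * k + 1)) → T, R (τ ∘ t) ↔ R t) ∧ τ ∘ τ = id ∧ τ ≠ id := by
  rintro ⟨τ, hbij, hauto, hinv2, hne⟩
  have hinv : ∀ x, τ (τ x) = x := fun x => congrFun hinv2 x
  set S : Set T := {x | τ x = x} with hS
  set M : Set T := {x | τ x ≠ x} with hM
  have hSM : S.Infinite ∨ M.Infinite := by
    by_contra h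
    push_neg at h
    have : (Set.univ : Set T).Finite := by
      have := h.1.union h.2
      refine this.subset ?_
      intro x _
      by_cases hx : τ x = x
      · exact Or.inl hx
      · exact Or.inr hx
    exact Set.infinite_univ this
  rcases hSM with hSinf | hMinf
  · -- infinitely many fixed points: use one moved pair + fixed points
    obtain ⟨a, ha⟩ : ∃ a, τ a ≠ a := by
      by_contra h
      push_neg at h
      exact hne (funext h)
    obtain e := hSinf.natEmbedding
    have he : ∀ n, τ ((e n : T)) = (e n : T) := fun n => (e n).2
    have hea : ∀ n, (e n : T) ≠ a := by
      intro n h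
      exact ha (by rw [← h, he])
    have heta : ∀ n, (e n : T) ≠ τ a := by
      intro n h
      apply ha
      have := he n
      rw [h] at this
      rw [hinv] at this
      rw [← this]
    have hN1 : 1 < 2 * (2 * k + 1) := by omega
    set i0 : Fin (2 * (2 * k + 1)) := ⟨0, by omega⟩ with hi0
    set i1 : Fin (2 * (2 * k + 1)) := ⟨1, hN1⟩ with hi1
    have hi01 : i0 ≠ i1 := by
      intro h
      exact absurd (congrArg Fin.val h) (by simp [hi0, hi1])
    set v : Fin (2 * (2 * k + 1)) → T :=
      fun x => if x = i0 then a else if x = i1 then τ a else (e x.val : T) with hv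
    have v0 : v i0 = a := by simp [hv]
    have v1 : v i1 = τ a := by simp [hv, hi01.symm]
    have vx : ∀ x, x ≠ i0 → x ≠ i1 → v x = (e x.val : T) := by
      intro x h0 h1; simp [hv, h0, h1]
    have hvinj : Function.Injective v := by
      intro x y hxy
      rcases eq_or_ne x i0 with h0 | h0
      · rcases eq_or_ne y i0 with g0 | g0
        · rw [h0, g0]
        · rcases eq_or_ne y i1 with g1 | g1
          · rw [h0, v0, g1, v1] at hxy
            exact absurd hxy.symm ha
          · rw [h0, v0, vx y g0 g1] at hxy
            exact absurd hxy.symm (hea y.val)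
      · rcases eq_or_ne x i1 with h1 | h1
        · rcases eq_or_ne y i0 with g0 | g0
          · rw [h1, v1, g0, v0] at hxy
            exact absurd hxy ha
          · rcases eq_or_ne y i1 with g1 | g1
            · rw [h1, g1]
            · rw [h1, v1, vx y g0 g1] at hxy
              exact absurd hxy.symm (heta y.val)
        · rw [vx x h0 h1] at hxy
          rcases eq_or_ne y i0 with g0 | g0
          · rw [g0, v0] at hxy
            exact absurd hxy (hea x.val)
          · rcases eq_or_ne y i1 with g1 | g1
            · rw [g1, v1] at hxy
              exact absurd hxy (heta x.val)
            · rw [vx y g0 g1] at hxy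
              exact Fin.ext (e.injective (Subtype.coe_injective hxy))
    have hcomm : τ ∘ v = v ∘ (Equiv.swap i0 i1) := by
      funext x
      show τ (v x) = v (Equiv.swap i0 i1 x)
      rcases eq_or_ne x i0 with h0 | h0
      · rw [h0, v0, Equiv.swap_apply_left, v1]
      · rcases eq_or_ne x i1 with h1 | h1
        · rw [h1, v1, Equiv.swap_apply_right, v0, hinv]
        · rw [Equiv.swap_apply_of_ne_of_ne h0 h1, vx x h0 h1, he]
    have hsign := sign_eq_one_of_comm hR hauto hvinj hcomm
    rw [Equiv.Perm.sign_swap hi01] at hsign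
    exact absurd hsign (by decide)
  · -- infinitely many moved points: use 2k+1 disjoint pairs
    obtain ⟨p, hpinj, hpair⟩ := exists_pairs τ hinv hMinf (2 * k + 1)
    set E : Fin (2 * k + 1) × Fin 2 ≃ Fin (2 * (2 * k + 1)) :=
      finProdFinEquiv.trans (finCongr (by ring)) with hE
    set w : Fin (2 * k + 1) × Fin 2 → T :=
      fun x => if x.2 = 0 then p x.1 else τ (p x.1) with hw
    have hwinj : Function.Injective w := by
      rintro ⟨i, j⟩ ⟨i', j'⟩ hij
      have hj : j = 0 ∨ j = 1 := by omega
      have hj' : j' = 0 ∨ j' = 1 := by omega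
      rcases hj with rfl | rfl <;> rcases hj' with rfl | rfl <;>
        simp only [hw, if_pos, if_neg, Fin.one_eq_zero_iff, OfNat.ofNat_ne_one,
          reduceIte] at hij
      · exact Prod.ext (hpinj hij) rfl
      · exact absurd hij.symm (hpair i' i)
      · exact absurd hij (hpair i i')
      · have : p i = p i' := by
          have := congrArg τ hij
          rwa [hinv, hinv] at this
        exact Prod.ext (hpinj this) rfl
    set π : Equiv.Perm (Fin (2 * k + 1) × Fin 2) :=
      Equiv.prodCongrRight (fun _ => Equiv.swap (0 : Fin 2) 1) with hπ
    set σ : Equiv.Perm (Fin (2 * (2 * k + 1))) := E.permCongr π with hσ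
    set v : Fin (2 * (2 * k + 1)) → T := w ∘ E.symm with hv
    have hvinj : Function.Injective v := hwinj.comp E.symm.injective
    have hτw : ∀ y, τ (w y) = w (π y) := by
      rintro ⟨i, j⟩
      have hj : j = 0 ∨ j = 1 := by omega
      rcases hj with rfl | rfl <;>
        simp [hw, hπ, Equiv.prodCongrRight_apply, Equiv.swap_apply_left,
          Equiv.swap_apply_right, hinv]
    have hcomm : τ ∘ v = v ∘ σ := by
      funext x
      show τ (w (E.symm x)) = w (E.symm (E (π (E.symm x))))
      rw [Equiv.symm_apply_apply]
      exact hτw _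
    have hsign := sign_eq_one_of_comm hR hauto hvinj hcomm
    rw [hσ, Equiv.Perm.sign_permCongr, hπ, Equiv.Perm.sign_prodCongrRight] at hsign
    have : (∏ _i : Fin (2 * k + 1), Equiv.Perm.sign (Equiv.swap (0 : Fin 2) 1))
        = (-1 : ℤˣ) ^ (2 * k + 1) := by
      rw [Equiv.Perm.sign_swap (by decide)]
      simp
    rw [this, Odd.neg_one_pow ⟨k, by ring⟩] at hsign
    exact absurd hsign (by decide)

end Stmt8
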